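/- If R: V → G is a relative Rota-Baxter operator of weight 0, then for all v ∈ V and m, n ∈ ℕ, Φ(R(nv)⁻¹)(mv) = m·Tⁿ(v), where T(v) = Φ(R(v)⁻¹)v. -/

import Mathlib

theorem rrb_T_iterate {G V : Type*} [Group G] [AddCommGroup V]
    (Φ : G →* Multiplicative (AddAut V)) (R : V → G)
    (hR : ∀ u v : V, R u * R v = R (u + Multiplicative.toAdd (Φ (R u)) v)) :
    ∀ (v : V) (m n : ℕ),
      Multiplicative.toAdd (Φ ((R (n • v))⁻¹)) (m • v) = m • ((fun w => Multiplicative.toAdd (Φ ((R w)⁻¹)) w)^[n] v) := by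
  have hR0 : R 0 = 1 := by
    have h := hR 0 0
    simp at h
    exact h
  intro v m n
  induction n generalizing m with
  | zero => simp [hR0]
  | succ n ih =>
    set T : V → V := fun w => Multiplicative.toAdd (Φ ((R w)⁻¹)) w with hT
    have h1 : Multiplicative.toAdd (Φ (R (n • v))) (T^[n] v) = v := by
      have h := ih 1
      simp only [one_smul] at h
      rw [← h, map_inv, toAdd_inv]
      exact (Multiplicative.toAdd (Φ (R (n • v)))).apply_symm_apply v
    have h2 : R ((n+1) • v) = R (n • v) * R (T^[n] v) := by
      rw [hR, h1, succ_nsmul]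
    rw [h2, mul_inv_rev, map_mul, map_inv, map_inv, toAdd_mul, toAdd_inv, toAdd_inv]
    have h3 : (-(Multiplicative.toAdd (Φ (R (n • v)))) : AddAut V) (m • v) = m • T^[n] v := by
      simpa [map_inv] using ih m
    show (-(Multiplicative.toAdd (Φ (R (T^[n] v)))) + -(Multiplicative.toAdd (Φ (R (n • v)))) : AddAut V) (m • v) = _
    rw [AddAut.add_apply, h3]
    have : (-(Multiplicative.toAdd (Φ (R (T^[n] v)))) : AddAut V) (m • T^[n] v)
        = m • (-(Multiplicative.toAdd (Φ (R (T^[n] v)))) : AddAut V) (T^[n] v) := by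
      exact map_nsmul (-(Multiplicative.toAdd (Φ (R (T^[n] v)))) : AddAut V) _ _
    rw [this]
    have h4 : (-(Multiplicative.toAdd (Φ (R (T^[n] v)))) : AddAut V) (T^[n] v) = T^[n+1] v := by
      rw [Function.iterate_succ_apply', hT]
      simp [map_inv]
    rw [h4]
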